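/- Define Φ : ℝ⁴ → ℝ² × ℝ² by Φ(r, θ, θ₁, θ₂) = (x₁, x₂) where x₁ = 2 r sin(θ − θ₁) · (−sin θ₁, cos θ₁) and x₂ = 2 r sin(θ − θ₂) · (−sin θ₂, cos θ₂); geometrically, x₁ and x₂ are the reflections of the origin in the lines passing through the point r·u_θ with directions u_{θ₁} and u_{θ₂} respectively. Then Φ is differentiable, and for every r > 0, θ ∈ (0, 2π) and θ − π < θ₁ < θ₂ < θ, the absolute value of the determinant of the total derivative of Φ at (r, θ, θ₁, θ₂) (viewing Φ as a map ℝ⁴ → ℝ⁴) equals 16 r³ |sin(θ₁ − θ₂) · sin(θ − θ₂) · sin(θ − θ₁)|. -/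

import Mathlib

open Metric Real Set MeasureTheory
open scoped RealInnerProductSpace

noncomputable section

/-- The Euclidean plane. -/
abbrev E2 := EuclideanSpace ℝ (Fin 2)

/-- The unit vector `u_θ = (cos θ, sin θ)`. -/
def uvec (θ : ℝ) : E2 := (WithLp.equiv 2 (Fin 2 → ℝ)).symm ![Real.cos θ, Real.sin θ]

/-- The vector `v_θ = (−sin θ, cos θ)`. -/
def vvec (θ : ℝ) : E2 := (WithLp.equiv 2 (Fin 2 → ℝ)).symm ![-Real.sin θ, Real.cos θ]

/-- The Voronoi flower of `L` with respect to `x`: the union over `s ∈ L` of the closed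
balls admitting the segment `[x, s]` as a diameter. -/
def vflower (x : E2) (L : Set E2) : Set E2 :=
  ⋃ s ∈ L, closedBall ((2:ℝ)⁻¹ • (x + s)) (‖s - x‖ / 2)

/-- The support function of `L` with respect to `x`: `p_x(L, w) = sup_{s ∈ L} ⟨s − x, w⟩`. -/
def suppf (x : E2) (L : Set E2) (w : E2) : ℝ :=
  sSup ((fun s => ⟪s - x, w⟫) '' L)

/-- The Blaschke–Petkantschin-type map `(r, θ, θ₁, θ₂) ↦ (x₁, x₂)`, written as a map
`ℝ⁴ → ℝ⁴`: the coordinates `0,1` are those of `x₁ = 2 r sin(θ−θ₁) · (−sin θ₁, cos θ₁)`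
and the coordinates `2,3` are those of `x₂ = 2 r sin(θ−θ₂) · (−sin θ₂, cos θ₂)`. -/
def PhiBP (p : Fin 4 → ℝ) : Fin 4 → ℝ :=
  ![2 * p 0 * Real.sin (p 1 - p 2) * (-Real.sin (p 2)),
    2 * p 0 * Real.sin (p 1 - p 2) * (Real.cos (p 2)),
    2 * p 0 * Real.sin (p 1 - p 3) * (-Real.sin (p 3)),
    2 * p 0 * Real.sin (p 1 - p 3) * (Real.cos (p 3))]

/-- The Jacobian matrix of `PhiBP`. -/
def Jmat (r θ a b : ℝ) : Matrix (Fin 4) (Fin 4) ℝ :=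
  !![2 * Real.sin (θ-a) * (-Real.sin a), 2*r*Real.cos (θ-a) * (-Real.sin a),
       -(2*r*Real.cos (θ-a) * (-Real.sin a)) + 2*r*Real.sin (θ-a) * (-Real.cos a), 0;
     2 * Real.sin (θ-a) * Real.cos a, 2*r*Real.cos (θ-a) * Real.cos a,
       -(2*r*Real.cos (θ-a) * Real.cos a) + 2*r*Real.sin (θ-a) * (-Real.sin a), 0;
     2 * Real.sin (θ-b) * (-Real.sin b), 2*r*Real.cos (θ-b) * (-Real.sin b), 0,
       -(2*r*Real.cos (θ-b) * (-Real.sin b)) + 2*r*Real.sin (θ-b) * (-Real.cos b);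
     2 * Real.sin (θ-b) * Real.cos b, 2*r*Real.cos (θ-b) * Real.cos b, 0,
       -(2*r*Real.cos (θ-b) * Real.cos b) + 2*r*Real.sin (θ-b) * (-Real.sin b)]

lemma hasFDerivAt_PhiBP (x : Fin 4 → ℝ) :
    HasFDerivAt PhiBP
      (LinearMap.toContinuousLinearMap (Matrix.toLin' (Jmat (x 0) (x 1) (x 2) (x 3)))) x := by
  have h0 : HasFDerivAt (fun p : Fin 4 → ℝ => p 0)
      (ContinuousLinearMap.proj 0 : (Fin 4 → ℝ) →L[ℝ] ℝ) x := hasFDerivAt_apply (𝕜 := ℝ) 0 x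
  have h1 : HasFDerivAt (fun p : Fin 4 → ℝ => p 1)
      (ContinuousLinearMap.proj 1 : (Fin 4 → ℝ) →L[ℝ] ℝ) x := hasFDerivAt_apply (𝕜 := ℝ) 1 x
  have h2 : HasFDerivAt (fun p : Fin 4 → ℝ => p 2)
      (ContinuousLinearMap.proj 2 : (Fin 4 → ℝ) →L[ℝ] ℝ) x := hasFDerivAt_apply (𝕜 := ℝ) 2 x
  have h3 : HasFDerivAt (fun p : Fin 4 → ℝ => p 3)
      (ContinuousLinearMap.proj 3 : (Fin 4 → ℝ) →L[ℝ] ℝ) x := hasFDerivAt_apply (𝕜 := ℝ) 3 x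
  rw [hasFDerivAt_pi']
  intro i
  fin_cases i
  · have hmain : HasFDerivAt
        (fun p : Fin 4 → ℝ => 2 * p 0 * Real.sin (p 1 - p 2) * (-Real.sin (p 2))) _ x :=
      ((h0.const_mul (2:ℝ)).mul ((h1.sub h2).sin)).mul (h2.sin.neg)
    refine (hmain.congr_fderiv ?_).congr_of_eventuallyEq (by filter_upwards with p; simp [PhiBP])
    ext v
    simp [Jmat, Matrix.mulVec, dotProduct, Fin.sum_univ_four]
    ring
  · have hmain : HasFDerivAt
        (fun p : Fin 4 → ℝ => 2 * p 0 * Real.sin (p 1 - p 2) * (Real.cos (p 2))) _ x :=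
      ((h0.const_mul (2:ℝ)).mul ((h1.sub h2).sin)).mul (h2.cos)
    refine (hmain.congr_fderiv ?_).congr_of_eventuallyEq (by filter_upwards with p; simp [PhiBP])
    ext v
    simp [Jmat, Matrix.mulVec, dotProduct, Fin.sum_univ_four]
    ring
  · have hmain : HasFDerivAt
        (fun p : Fin 4 → ℝ => 2 * p 0 * Real.sin (p 1 - p 3) * (-Real.sin (p 3))) _ x :=
      ((h0.const_mul (2:ℝ)).mul ((h1.sub h3).sin)).mul (h3.sin.neg)
    refine (hmain.congr_fderiv ?_).congr_of_eventuallyEq (by filter_upwards with p; simp [PhiBP])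
    ext v
    simp [Jmat, Matrix.mulVec, dotProduct, Fin.sum_univ_four]
    ring
  · have hmain : HasFDerivAt
        (fun p : Fin 4 → ℝ => 2 * p 0 * Real.sin (p 1 - p 3) * (Real.cos (p 3))) _ x :=
      ((h0.const_mul (2:ℝ)).mul ((h1.sub h3).sin)).mul (h3.cos)
    refine (hmain.congr_fderiv ?_).congr_of_eventuallyEq (by filter_upwards with p; simp [PhiBP])
    ext v
    simp [Jmat, Matrix.mulVec, dotProduct, Fin.sum_univ_four]
    ring

lemma det_Jmat (r θ a b : ℝ) :
    (Jmat r θ a b).det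
      = 16 * r^3 * (Real.sin (a - b) * Real.sin (θ - b) * Real.sin (θ - a)) := by
  simp [Jmat, Matrix.det_succ_row_zero, Fin.sum_univ_succ, Matrix.submatrix_apply,
    Matrix.cons_val_succ, Matrix.cons_val_zero, Fin.succAbove, -Fin.lt_def,
    Real.sin_sub, Real.cos_sub]
  linear_combination
    ((-16)*r^3*(Real.cos θ)^2*(Real.sin b)*(Real.cos b) + (16)*r^3*(Real.cos θ)^4*(Real.sin b)*(Real.cos b)^3 + (16)*r^3*(Real.cos θ)^4*(Real.sin b)^3*(Real.cos b) + (-16)*r^3*(Real.cos θ)^4*(Real.sin a)*(Real.cos a)*(Real.sin b)^2*(Real.cos b)^2 + (-16)*r^3*(Real.cos θ)^4*(Real.sin a)*(Real.cos a)*(Real.sin b)^4 + (16)*r^3*(Real.cos θ)^4*(Real.sin a)^2*(Real.sin b)*(Real.cos b)^3 + (16)*r^3*(Real.cos θ)^4*(Real.sin a)^2*(Real.sin b)^3*(Real.cos b) + (16)*r^3*(Real.sin θ)*(Real.cos θ)*(Real.cos b)^2 + (-16)*r^3*(Real.sin θ)*(Real.cos θ)^3*(Real.cos b)^4 + (-16)*r^3*(Real.sin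 θ)*(Real.cos θ)^3*(Real.sin b)^2*(Real.cos b)^2 + (16)*r^3*(Real.sin θ)*(Real.cos θ)^3*(Real.cos a)^2*(Real.sin b)^2*(Real.cos b)^2 + (16)*r^3*(Real.sin θ)*(Real.cos θ)^3*(Real.cos a)^2*(Real.sin b)^4 + (-16)*r^3*(Real.sin θ)*(Real.cos θ)^3*(Real.sin a)^2*(Real.cos b)^4 + (-16)*r^3*(Real.sin θ)*(Real.cos θ)^3*(Real.sin a)^2*(Real.sin b)^2*(Real.cos b)^2 + (16)*r^3*(Real.sin θ)^2*(Real.cos θ)^2*(Real.sin b)*(Real.cos b)^3 + (16)*r^3*(Real.sin θ)^2*(Real.cos θ)^2*(Real.sin b)^3*(Real.cos b) + (-16)*r^3*(Real.sin θ)^2*(Real.cos θ)^2*(Real.cos a)^2*(Real.sin b)*(Real.cos b)^3 + (-16)*r^3*(Real.sin θ)^2*(Real.cos θ)^2*(Real.cos a)^2*(Real.sin b)^3*(Real.cos b) + (16)*r^3*(Real.sin θ)^2*(Real.cos θ)^2*(Real.sin a)*(Real.cos a)*(Real.cos b)^4 + (-16)*r^3*(Real.sin θ)^2*(Real.cos θ)^2*(Real.sin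 a)*(Real.cos a)*(Real.sin b)^4 + (16)*r^3*(Real.sin θ)^2*(Real.cos θ)^2*(Real.sin a)^2*(Real.sin b)*(Real.cos b)^3 + (16)*r^3*(Real.sin θ)^2*(Real.cos θ)^2*(Real.sin a)^2*(Real.sin b)^3*(Real.cos b) + (-16)*r^3*(Real.sin θ)^3*(Real.cos θ)*(Real.cos b)^4 + (-16)*r^3*(Real.sin θ)^3*(Real.cos θ)*(Real.sin b)^2*(Real.cos b)^2 + (16)*r^3*(Real.sin θ)^3*(Real.cos θ)*(Real.cos a)^2*(Real.sin b)^2*(Real.cos b)^2 + (16)*r^3*(Real.sin θ)^3*(Real.cos θ)*(Real.cos a)^2*(Real.sin b)^4 + (-16)*r^3*(Real.sin θ)^3*(Real.cos θ)*(Real.sin a)^2*(Real.cos b)^4 + (-16)*r^3*(Real.sin θ)^3*(Real.cos θ)*(Real.sin a)^2*(Real.sin b)^2*(Real.cos b)^2 + (-16)*r^3*(Real.sin θ)^4*(Real.cos a)^2*(Real.sin b)*(Real.cos b)^3 + (-16)*r^3*(Real.sin θ)^4*(Real.cos a)^2*(Real.sin b)^3*(Real.cos b) + (16)*r^3*(Real.sin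 θ)^4*(Real.sin a)*(Real.cos a)*(Real.cos b)^4 + (16)*r^3*(Real.sin θ)^4*(Real.sin a)*(Real.cos a)*(Real.sin b)^2*(Real.cos b)^2) * (Real.sin_sq_add_cos_sq a)
    + ((16)*r^3*(Real.cos θ)^2*(Real.sin a)*(Real.cos a) + (16)*r^3*(Real.cos θ)^4*(Real.sin b)*(Real.cos b) + (-16)*r^3*(Real.cos θ)^4*(Real.cos a)^2*(Real.sin b)*(Real.cos b) + (-16)*r^3*(Real.cos θ)^4*(Real.sin a)*(Real.cos a) + (-16)*r^3*(Real.cos θ)^4*(Real.sin a)*(Real.cos a)*(Real.sin b)^2 + (-16)*r^3*(Real.sin θ)*(Real.cos θ)*(Real.cos a)^2 + (-16)*r^3*(Real.sin θ)*(Real.cos θ)^3*(Real.cos b)^2 + (16)*r^3*(Real.sin θ)*(Real.cos θ)^3*(Real.cos a)^2 + (16)*r^3*(Real.sin θ)*(Real.cos θ)^3*(Real.cos a)^2*(Real.cos b)^2 + (16)*r^3*(Real.sin θ)*(Real.cos θ)^3*(Real.cos a)^2*(Real.sin b)^2 + (16)*r^3*(Real.sin θ)^2*(Real.cos θ)^2*(Real.sin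 b)*(Real.cos b) + (-32)*r^3*(Real.sin θ)^2*(Real.cos θ)^2*(Real.cos a)^2*(Real.sin b)*(Real.cos b) + (-16)*r^3*(Real.sin θ)^2*(Real.cos θ)^2*(Real.sin a)*(Real.cos a) + (16)*r^3*(Real.sin θ)^2*(Real.cos θ)^2*(Real.sin a)*(Real.cos a)*(Real.cos b)^2 + (-16)*r^3*(Real.sin θ)^2*(Real.cos θ)^2*(Real.sin a)*(Real.cos a)*(Real.sin b)^2 + (-16)*r^3*(Real.sin θ)^3*(Real.cos θ)*(Real.cos b)^2 + (16)*r^3*(Real.sin θ)^3*(Real.cos θ)*(Real.cos a)^2 + (16)*r^3*(Real.sin θ)^3*(Real.cos θ)*(Real.cos a)^2*(Real.cos b)^2 + (16)*r^3*(Real.sin θ)^3*(Real.cos θ)*(Real.cos a)^2*(Real.sin b)^2 + (-16)*r^3*(Real.sin θ)^4*(Real.cos a)^2*(Real.sin b)*(Real.cos b) + (16)*r^3*(Real.sin θ)^4*(Real.sin a)*(Real.cos a)*(Real.cos b)^2) * (Real.sin_sq_add_cos_sq b)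
    + ((16)*r^3*(Real.cos θ)^2*(Real.sin b)*(Real.cos b) + (-16)*r^3*(Real.cos θ)^2*(Real.cos a)^2*(Real.sin b)*(Real.cos b) + (-16)*r^3*(Real.cos θ)^2*(Real.sin a)*(Real.cos a) + (16)*r^3*(Real.cos θ)^2*(Real.sin a)*(Real.cos a)*(Real.cos b)^2 + (-16)*r^3*(Real.sin θ)*(Real.cos θ)*(Real.cos b)^2 + (16)*r^3*(Real.sin θ)*(Real.cos θ)*(Real.cos a)^2 + (-16)*r^3*(Real.sin θ)^2*(Real.cos a)^2*(Real.sin b)*(Real.cos b) + (16)*r^3*(Real.sin θ)^2*(Real.sin a)*(Real.cos a)*(Real.cos b)^2) * (Real.sin_sq_add_cos_sq θ)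

/-- `Φ` is differentiable and, for `r > 0`, `θ ∈ (0, 2π)` and
`θ − π < θ₁ < θ₂ < θ`, the absolute value of the Jacobian determinant of `Φ` at
`(r, θ, θ₁, θ₂)` equals `16 r³ |sin(θ₁−θ₂) sin(θ−θ₂) sin(θ−θ₁)|`. -/
theorem jacobian_PhiBP :
    Differentiable ℝ PhiBP ∧
    ∀ r θ θ₁ θ₂ : ℝ, 0 < r → θ ∈ Ioo 0 (2*π) → θ - π < θ₁ → θ₁ < θ₂ → θ₂ < θ →
      |LinearMap.det ((fderiv ℝ PhiBP ![r, θ, θ₁, θ₂]).toLinearMap)|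
        = 16 * r ^ 3 * |Real.sin (θ₁ - θ₂) * Real.sin (θ - θ₂) * Real.sin (θ - θ₁)| := by
  constructor
  · exact fun x => (hasFDerivAt_PhiBP x).differentiableAt
  · intro r θ θ₁ θ₂ hr _ _ _ _
    rw [(hasFDerivAt_PhiBP ![r, θ, θ₁, θ₂]).fderiv]
    rw [show (Jmat (![r, θ, θ₁, θ₂] 0) (![r, θ, θ₁, θ₂] 1) (![r, θ, θ₁, θ₂] 2)
        (![r, θ, θ₁, θ₂] 3)) = Jmat r θ θ₁ θ₂ from rfl]
    rw [LinearMap.coe_toContinuousLinearMap, LinearMap.det_toLin', det_Jmat, abs_mul,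
      abs_of_pos (show (0:ℝ) < 16 * r ^ 3 by positivity)]
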